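/- Let W be a real random variable with E[W₊^{ν+4}] < ∞ and let S be a positive random variable independent of W with νS² chi-square with ν degrees of freedom. Then as x → ∞, P(W S⁻¹ > x) = a_ν x^{-ν} ( E[W₊^ν] - b_ν x^{-2} E[W₊^{ν+2}] + O(x^{-4}) ), where W₊ = max(W,0) and a_ν, b_ν are as in the chi-square tail lemma. -/

import Mathlib

open MeasureTheory ProbabilityTheory Real Filter Asymptotics

open Set


lemma exp_neg_le_quad {u : ℝ} (hu : 0 ≤ u) : Real.exp (-u) ≤ 1 - u + u^2/2 := by
  have key : ∀ v : ℝ, HasDerivAt (fun t => 1 - t + t^2/2 - Real.exp (-t))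
      (-1 + v + Real.exp (-v)) v := by
    intro v
    have h1 : HasDerivAt (fun t : ℝ => 1 - t) (-1) v := by
      simpa using (hasDerivAt_id v).const_sub 1
    have h2 : HasDerivAt (fun t : ℝ => t^2/2) v v := by
      have := (hasDerivAt_pow 2 v).div_const 2
      simpa using this
    have h3 : HasDerivAt (fun t : ℝ => Real.exp (-t)) (-Real.exp (-v)) v := by
      simpa [Function.comp_def] using (Real.hasDerivAt_exp (-v)).comp v ((hasDerivAt_id v).neg)
    exact ((h1.add h2).sub h3).congr_deriv (by ring)
  have hmono : MonotoneOn (fun t => 1 - t + t^2/2 - Real.exp (-t)) (Set.Ici 0) := by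
    apply monotoneOn_of_deriv_nonneg (convex_Ici 0)
    · exact Continuous.continuousOn (by continuity)
    · intro t _; exact (key t).differentiableAt.differentiableWithinAt
    · intro t _
      rw [(key t).deriv]
      have := Real.add_one_le_exp (-t)
      linarith
  have h0 := hmono Set.self_mem_Ici hu hu
  simp only [Real.exp_zero] at h0
  norm_num at h0
  linarith

lemma integral_rpow_Ioo {q T : ℝ} (hq : -1 < q) (hT : 0 < T) :
    ∫ x in Set.Ioo (0:ℝ) T, x ^ q = T ^ (q + 1) / (q + 1) := by
  rw [← integral_Ioc_eq_integral_Ioo, ← intervalIntegral.integral_of_le hT.le,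
    integral_rpow (Or.inl hq), Real.zero_rpow (by linarith), sub_zero]

lemma integrableOn_rpow_Ioo {q T : ℝ} (hq : -1 < q) (hT : 0 < T) :
    IntegrableOn (fun x => x ^ q) (Set.Ioo (0:ℝ) T) := by
  have := intervalIntegral.intervalIntegrable_rpow' (a := 0) (b := T) hq
  rw [intervalIntegrable_iff, uIoc_of_le hT.le] at this
  exact this.mono_set Set.Ioo_subset_Ioc_self

lemma gamma_iio_eq (p : ℝ) (hp : 0 < p) {T : ℝ} (hT : 0 < T) :
    (gammaMeasure p (1/2) (Set.Iio T)).toReal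
      = ∫ x in Set.Ioo (0:ℝ) T, (1/2:ℝ) ^ p / Real.Gamma p * x ^ (p-1) * Real.exp (-(1/2 * x)) := by
  have hk : 0 ≤ (1/2:ℝ) ^ p / Real.Gamma p := by
    have := Real.Gamma_pos_of_pos hp
    positivity
  have hsplit : Set.Iio T = Set.Ioo 0 T ∪ Set.Iic 0 := by
    ext y; simp only [Set.mem_Iio, Set.mem_union, Set.mem_Ioo, Set.mem_Iic]
    constructor
    · intro hy; rcases le_or_gt y 0 with h | h
      · exact Or.inr h
      · exact Or.inl ⟨h, hy⟩
    · rintro (⟨_, h⟩ | h) <;> linarith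
  have hIic : (∫⁻ x in Set.Iic 0, gammaPDF p (1/2) x) = 0 := by
    rw [lintegral_Iic_eq_lintegral_Iio_add_Icc _ (le_refl 0),
      ProbabilityTheory.lintegral_gammaPDF_of_nonpos (le_refl 0)]
    rw [setLIntegral_measure_zero _ _ (by simp : volume (Set.Icc (0:ℝ) 0) = 0)]
    simp
  rw [gammaMeasure, withDensity_apply _ measurableSet_Iio, hsplit,
    lintegral_union measurableSet_Iic (by
      simp only [Set.disjoint_iff_forall_ne, Set.mem_Ioo, Set.mem_Iic]
      rintro a ⟨ha, _⟩ b hb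
      intro h; rw [h] at ha; linarith), hIic, add_zero]
  have hcongr : ∀ x ∈ Set.Ioo (0:ℝ) T, gammaPDF p (1/2) x
      = ENNReal.ofReal ((1/2:ℝ) ^ p / Real.Gamma p * x ^ (p-1) * Real.exp (-(1/2 * x))) := by
    intro x hx
    rw [gammaPDF_of_nonneg hx.1.le]
  rw [setLIntegral_congr_fun measurableSet_Ioo hcongr]
  rw [integral_eq_lintegral_of_nonneg_ae]
  · exact (ae_restrict_iff' measurableSet_Ioo).mpr (ae_of_all _ fun x hx => by
      have h1 : (0:ℝ) ≤ x := hx.1.le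
      positivity)
  · refine (Measurable.aestronglyMeasurable ?_).restrict
    exact ((measurable_id.pow_const _).const_mul _).mul (measurable_id.const_mul _ |>.neg.exp)

lemma gamma_iio_bounds (p : ℝ) (hp : 0 < p) {T : ℝ} (hT : 0 < T) :
    (1/2:ℝ) ^ p / Real.Gamma p * (T^p/p - T^(p+1)/(2*(p+1)))
      ≤ (gammaMeasure p (1/2) (Set.Iio T)).toReal
    ∧ (gammaMeasure p (1/2) (Set.Iio T)).toReal
      ≤ (1/2:ℝ) ^ p / Real.Gamma p * (T^p/p - T^(p+1)/(2*(p+1)))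
        + (1/2:ℝ) ^ p / Real.Gamma p * T^(p+2)/(8*(p+2)) := by
  set k := (1/2:ℝ) ^ p / Real.Gamma p with hk_def
  have hk : 0 ≤ k := by
    have := Real.Gamma_pos_of_pos hp
    positivity
  rw [gamma_iio_eq p hp hT]
  -- integrability of the three power functions
  have i1 := integrableOn_rpow_Ioo (q := p - 1) (by linarith) hT
  have i2 := integrableOn_rpow_Ioo (q := p) (by linarith) hT
  have i3 := integrableOn_rpow_Ioo (q := p + 1) (by linarith) hT
  have ig : IntegrableOn (fun x => k * x ^ (p-1) * Real.exp (-(1/2 * x))) (Set.Ioo (0:ℝ) T) := by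
    apply Integrable.mono ((i1.const_mul k))
    · refine (Measurable.aestronglyMeasurable ?_).restrict
      exact ((measurable_id.pow_const _).const_mul _).mul (measurable_id.const_mul _ |>.neg.exp)
    · refine (ae_restrict_iff' measurableSet_Ioo).mpr (ae_of_all _ fun x hx => ?_)
      have h1 : (0:ℝ) < x := hx.1
      have he : Real.exp (-(1/2 * x)) ≤ 1 := Real.exp_le_one_iff.mpr (by linarith)
      rw [Real.norm_eq_abs, Real.norm_eq_abs, abs_of_nonneg (by positivity),
        abs_of_nonneg (by positivity)]
      calc k * x ^ (p-1) * Real.exp (-(1/2 * x)) ≤ k * x ^ (p-1) * 1 := by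
            apply mul_le_mul_of_nonneg_left he (by positivity)
        _ = k * x ^ (p-1) := by ring
  have il : IntegrableOn (fun x => k * x ^ (p-1) - (k/2) * x ^ p) (Set.Ioo (0:ℝ) T) :=
    (i1.const_mul k).sub (i2.const_mul (k/2))
  have iu : IntegrableOn (fun x => k * x ^ (p-1) - (k/2) * x ^ p + (k/8) * x ^ (p+1))
      (Set.Ioo (0:ℝ) T) := il.add (i3.const_mul (k/8))
  have hptwise : ∀ x ∈ Set.Ioo (0:ℝ) T,
      k * x ^ (p-1) - (k/2) * x ^ p ≤ k * x ^ (p-1) * Real.exp (-(1/2 * x))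
      ∧ k * x ^ (p-1) * Real.exp (-(1/2 * x))
        ≤ k * x ^ (p-1) - (k/2) * x ^ p + (k/8) * x ^ (p+1) := by
    intro x hx
    have h1 : (0:ℝ) < x := hx.1
    have hxp : x ^ p = x ^ (p-1) * x := by
      rw [← Real.rpow_add_one h1.ne' (p-1)]; ring_nf
    have hxp1 : x ^ (p+1) = x ^ (p-1) * x^2 := by
      rw [show p + 1 = (p-1) + 2 by ring, Real.rpow_add h1 (p-1) 2, Real.rpow_two]
    have hlo : 1 - (1/2*x) ≤ Real.exp (-(1/2*x)) := by
      have := Real.add_one_le_exp (-(1/2*x)); linarith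
    have hhi : Real.exp (-(1/2*x)) ≤ 1 - (1/2*x) + (1/2*x)^2/2 := exp_neg_le_quad (by linarith)
    have hb : (0:ℝ) ≤ k * x ^ (p-1) := by positivity
    constructor
    · have := mul_le_mul_of_nonneg_left hlo hb
      rw [hxp]; nlinarith [this]
    · have := mul_le_mul_of_nonneg_left hhi hb
      rw [hxp, hxp1]; nlinarith [this]
  constructor
  · have hle : ∫ x in Set.Ioo (0:ℝ) T, (k * x ^ (p-1) - (k/2) * x ^ p)
        ≤ ∫ x in Set.Ioo (0:ℝ) T, k * x ^ (p-1) * Real.exp (-(1/2 * x)) :=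
      setIntegral_mono_on il ig measurableSet_Ioo (fun x hx => (hptwise x hx).1)
    refine le_trans (le_of_eq ?_) hle
    rw [integral_sub (i1.const_mul k) (i2.const_mul (k/2)), integral_const_mul, integral_const_mul,
      integral_rpow_Ioo (by linarith) hT, integral_rpow_Ioo (by linarith) hT]
    have h1 : p ≠ 0 := hp.ne'
    have h2 : p + 1 ≠ 0 := by linarith
    field_simp
    ring_nf
    field_simp
  · have hle : ∫ x in Set.Ioo (0:ℝ) T, k * x ^ (p-1) * Real.exp (-(1/2 * x))
        ≤ ∫ x in Set.Ioo (0:ℝ) T, (k * x ^ (p-1) - (k/2) * x ^ p + (k/8) * x ^ (p+1)) :=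
      setIntegral_mono_on ig iu measurableSet_Ioo (fun x hx => (hptwise x hx).2)
    refine le_trans hle (le_of_eq ?_)
    rw [integral_add il (i3.const_mul (k/8)),
      integral_sub (i1.const_mul k) (i2.const_mul (k/2)), integral_const_mul, integral_const_mul,
      integral_const_mul, integral_rpow_Ioo (by linarith) hT, integral_rpow_Ioo (by linarith) hT,
      integral_rpow_Ioo (by linarith) hT]
    have h1 : p ≠ 0 := hp.ne'
    have h2 : p + 1 ≠ 0 := by linarith
    have h3 : p + 2 ≠ 0 := by linarith
    field_simp
    ring_nf
    field_simp
    ring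

set_option maxHeartbeats 1600000 in
theorem product_tail_expansion
    {Ω : Type*} [MeasurableSpace Ω] (P : Measure Ω) [IsProbabilityMeasure P]
    (ν : ℝ) (hν : 0 < ν)
    (S W : Ω → ℝ) (hS : ∀ ω, 0 < S ω)
    (hchi : Measure.map (fun ω => ν * S ω ^ 2) P = gammaMeasure (ν / 2) (1 / 2))
    (hW : Integrable (fun ω => max (W ω) 0 ^ (ν + 4)) P)
    (hindep : IndepFun S W P) :
    (fun x : ℝ =>
        (P {ω | W ω * (S ω)⁻¹ > x}).toReal -
          (ν / 2) ^ (ν / 2) / Real.Gamma (ν / 2 + 1) * x ^ (-ν) *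
            ((∫ ω, max (W ω) 0 ^ ν ∂P) -
              (ν / 2) ^ 2 / (ν / 2 + 1) * x ^ (-2 : ℝ) *
                ∫ ω, max (W ω) 0 ^ (ν + 2) ∂P))
      =O[Filter.atTop] (fun x : ℝ => x ^ (-ν - 4)) := by
  have hp : (0:ℝ) < ν / 2 := by linarith
  have hgprob : IsProbabilityMeasure (gammaMeasure (ν/2) (1/2)) :=
    isProbabilityMeasure_gammaMeasure hp (by norm_num)
  -- AEMeasurability of S
  have hq : AEMeasurable (fun ω => ν * S ω ^ 2) P := by
    by_contra h
    rw [Measure.map_of_not_aemeasurable h] at hchi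
    have h1 := hgprob.measure_univ
    rw [← hchi] at h1
    simp at h1
  have hSm : AEMeasurable S P := by
    have h1 : AEMeasurable (fun ω => Real.sqrt ((ν * S ω ^ 2) / ν)) P :=
      Real.continuous_sqrt.measurable.comp_aemeasurable (hq.div_const ν)
    refine h1.congr (ae_of_all _ fun ω => ?_)
    show Real.sqrt (ν * S ω ^ 2 / ν) = S ω
    rw [mul_div_cancel_left₀ _ hν.ne', Real.sqrt_sq (hS ω).le]
  have hWpm : AEMeasurable (fun ω => max (W ω) 0) P := by
    have h1 : AEMeasurable (fun ω => (max (W ω) 0 ^ (ν+4)) ^ ((ν+4)⁻¹)) P :=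
      hW.aemeasurable.pow_const _
    refine h1.congr (ae_of_all _ fun ω => ?_)
    show (max (W ω) 0 ^ (ν+4)) ^ ((ν+4)⁻¹) = max (W ω) 0
    rw [← Real.rpow_mul (le_max_right _ _), mul_inv_cancel₀ (by linarith : ν + 4 ≠ 0),
      Real.rpow_one]
  -- measurable representatives
  set S' := hSm.mk S with hS'def
  set W' := hWpm.mk _ with hW'def
  have hS'meas : Measurable S' := hSm.measurable_mk
  have hW'meas : Measurable W' := hWpm.measurable_mk
  have hSS' : S =ᵐ[P] S' := hSm.ae_eq_mk
  have hWW' : (fun ω => max (W ω) 0) =ᵐ[P] W' := hWpm.ae_eq_mk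
  have hS'pos : ∀ᵐ ω ∂P, 0 < S' ω := by
    filter_upwards [hSS'] with ω h; rw [← h]; exact hS ω
  have hW'nonneg : ∀ᵐ ω ∂P, 0 ≤ W' ω := by
    filter_upwards [hWW'] with ω h; rw [← h]; exact le_max_right _ _
  set μS := P.map S' with hμSdef
  set μW := P.map W' with hμWdef
  have : IsProbabilityMeasure μS := Measure.isProbabilityMeasure_map hS'meas.aemeasurable
  have : IsProbabilityMeasure μW := Measure.isProbabilityMeasure_map hW'meas.aemeasurable
  -- independence of the representatives
  have hindep' : IndepFun S' W' P := by
    refine IndepFun.congr ?_ hSS' hWW'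
    exact hindep.comp measurable_id (measurable_id.max measurable_const)
  have hprod : P.map (fun ω => (S' ω, W' ω)) = μS.prod μW :=
    (indepFun_iff_map_prod_eq_prod_map_map hS'meas.aemeasurable
      hW'meas.aemeasurable).mp hindep'
  -- μS gives no mass to (-∞, 0]
  have hμSIic : μS (Set.Iic 0) = 0 := by
    rw [hμSdef, Measure.map_apply hS'meas measurableSet_Iic]
    have h0 : P {ω | ¬ (0 < S' ω)} = 0 := ae_iff.mp hS'pos
    exact measure_mono_null (fun ω hω => not_lt.mpr hω) h0
  -- μS of Iio z equals gamma measure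
  have hmapq : Measure.map (fun s => ν * s ^ 2) μS = gammaMeasure (ν/2) (1/2) := by
    rw [hμSdef, Measure.map_map (by fun_prop : Measurable fun s : ℝ => ν * s ^ 2) hS'meas]
    rw [← hchi]
    exact Measure.map_congr (by filter_upwards [hSS'] with ω h; simp [Function.comp, h])
  have hgam : ∀ z : ℝ, 0 < z → μS (Set.Iio z) = gammaMeasure (ν/2) (1/2) (Set.Iio (ν * z^2)) := by
    intro z hz
    have hpre : (fun s => ν * s ^ 2) ⁻¹' (Set.Iio (ν * z^2)) = Set.Ioo (-z) z := by
      ext s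
      simp only [Set.mem_preimage, Set.mem_Iio, Set.mem_Ioo]
      constructor
      · intro h
        have hs2 : s^2 < z^2 := (mul_lt_mul_iff_right₀ hν).mp h
        constructor
        · nlinarith [sq_nonneg (s + z)]
        · nlinarith [sq_nonneg (s - z)]
      · intro ⟨h1, h2⟩
        have : (z - s) * (z + s) > 0 := mul_pos (by linarith) (by linarith)
        nlinarith
    rw [← hmapq, Measure.map_apply (by fun_prop : Measurable fun s : ℝ => ν * s ^ 2)
      measurableSet_Iio, hpre]
    have hset : Set.Iio z = Set.Ioo (-z) z ∪ Set.Iic (-z) := by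
      ext s
      simp only [Set.mem_Iio, Set.mem_union, Set.mem_Ioo, Set.mem_Iic]
      constructor
      · intro h; rcases lt_or_ge (-z) s with h' | h'
        · exact Or.inl ⟨h', h⟩
        · exact Or.inr h'
      · rintro (⟨_, h⟩ | h) <;> linarith
    have hnull : μS (Set.Iic (-z)) = 0 :=
      measure_mono_null (Set.Iic_subset_Iic.mpr (by linarith)) hμSIic
    rw [hset]
    apply le_antisymm
    · calc μS (Set.Ioo (-z) z ∪ Set.Iic (-z)) ≤ μS (Set.Ioo (-z) z) + μS (Set.Iic (-z)) :=
          measure_union_le _ _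
        _ = μS (Set.Ioo (-z) z) := by rw [hnull, add_zero]
    · exact measure_mono Set.subset_union_left
  -- tail representation
  have hrep : ∀ x : ℝ, 0 < x →
      P {ω | W ω * (S ω)⁻¹ > x} = ∫⁻ w, μS (Set.Iio (w / x)) ∂μW := by
    intro x hx
    have hA : MeasurableSet {p : ℝ × ℝ | x * p.1 < p.2} :=
      measurableSet_lt (measurable_fst.const_mul x) measurable_snd
    have hev : P {ω | W ω * (S ω)⁻¹ > x} = P ((fun ω => (S' ω, W' ω)) ⁻¹' {p | x * p.1 < p.2}) := by
      apply measure_congr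
      rw [Filter.eventuallyEq_set]
      filter_upwards [hSS', hWW'] with ω h1 h2
      have h2' : max (W ω) 0 = W' ω := h2
      simp only [Set.mem_setOf_eq, Set.mem_preimage, ← h1, ← h2']
      have hSω := hS ω
      constructor
      · intro hgt
        have hx' : x * S ω < W ω := by
          rw [gt_iff_lt, ← div_eq_mul_inv, lt_div_iff₀ hSω] at hgt
          exact hgt
        exact lt_max_of_lt_left hx'
      · intro hlt
        rcases lt_max_iff.mp hlt with h | h
        · show x < W ω * (S ω)⁻¹
          rw [← div_eq_mul_inv]
          exact (lt_div_iff₀ hSω).mpr h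
        · nlinarith
    rw [hev, ← Measure.map_apply (hS'meas.prodMk hW'meas) hA, hprod,
      Measure.prod_apply_symm hA]
    congr 1
    ext w
    congr 1
    ext s
    simp only [Set.mem_preimage, Set.mem_setOf_eq, Set.mem_Iio]
    rw [lt_div_iff₀ hx, mul_comm]
  -- constants
  set p : ℝ := ν / 2 with hpdef
  set k : ℝ := (1/2:ℝ) ^ p / Real.Gamma p with hkdef
  set A : ℝ := (ν / 2) ^ (ν / 2) / Real.Gamma (ν / 2 + 1) with hAdef
  set bb : ℝ := (ν / 2) ^ 2 / (ν / 2 + 1) with hbbdef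
  set Cc : ℝ := k * ν ^ (p+2) / (8*(p+2)) with hCcdef
  have hGp : 0 < Real.Gamma p := Real.Gamma_pos_of_pos hp
  have hk0 : 0 < k := by rw [hkdef]; positivity
  have hnup : ν ^ p = (ν/2) ^ p / (1/2:ℝ) ^ p := by
    rw [eq_div_iff (by positivity : (1/2:ℝ) ^ p ≠ 0), ← Real.mul_rpow (by linarith) (by norm_num)]
    congr 1
    ring
  have hA : k * ν ^ p / p = A := by
    rw [hkdef, hAdef, hnup, Real.Gamma_add_one hp.ne']
    field_simp
    ring
  have hB : k * ν ^ (p+1) / (2*(p+1)) = A * bb := by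
    rw [← hA, hbbdef, Real.rpow_add_one hν.ne' p]
    have h1 : p + 1 ≠ 0 := by positivity
    have h2 : ν / 2 + 1 ≠ 0 := by positivity
    rw [hpdef]
    field_simp
  -- pointwise sandwich
  have hsand : ∀ x : ℝ, 0 < x → ∀ w : ℝ,
      A / x^ν * (max w 0)^ν - (A*bb) / x^(ν+2) * (max w 0)^(ν+2)
        ≤ (μS (Set.Iio (w / x))).toReal
      ∧ (μS (Set.Iio (w / x))).toReal
        ≤ A / x^ν * (max w 0)^ν - (A*bb) / x^(ν+2) * (max w 0)^(ν+2)
          + Cc / x^(ν+4) * (max w 0)^(ν+4) := by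
    intro x hx w
    rcases le_or_gt w 0 with hw | hw
    · have h0 : μS (Set.Iio (w / x)) = 0 :=
        measure_mono_null (fun s hs => le_trans (le_of_lt hs) (div_nonpos_iff.mpr (Or.inr ⟨hw, hx.le⟩)))
          hμSIic
      rw [h0, max_eq_right hw, Real.zero_rpow hν.ne', Real.zero_rpow (by linarith : ν + 2 ≠ 0),
        Real.zero_rpow (by linarith : ν + 4 ≠ 0)]
      norm_num
    · set z := w / x with hzdef
      have hz : 0 < z := div_pos hw hx
      have hT : 0 < ν * z^2 := by positivity
      have hbd := gamma_iio_bounds p hp hT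
      rw [← hgam z hz] at hbd
      have hzpow : ∀ q q2 : ℝ, 2 * q2 = q → (ν * z^2)^q2 = ν^q2 * z^q := by
        intro q q2 hq
        rw [Real.mul_rpow hν.le (sq_nonneg z), ← Real.rpow_natCast z 2,
          ← Real.rpow_mul hz.le]
        norm_num [hq]
      have e1 : (ν * z^2)^p = ν^p * z^ν := hzpow ν p (by rw [hpdef]; ring)
      have e2 : (ν * z^2)^(p+1) = ν^(p+1) * z^(ν+2) := hzpow (ν+2) (p+1) (by rw [hpdef]; ring)
      have e3 : (ν * z^2)^(p+2) = ν^(p+2) * z^(ν+4) := hzpow (ν+4) (p+2) (by rw [hpdef]; ring)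
      rw [e1, e2, e3] at hbd
      have hmax : max w 0 = w := max_eq_left hw.le
      have hzq : ∀ q : ℝ, z^q = w^q / x^q := fun q => Real.div_rpow hw.le hx.le q
      have hL : k * (( ν^p * z^ν)/p - (ν^(p+1) * z^(ν+2))/(2*(p+1)))
          = A / x^ν * (max w 0)^ν - (A*bb) / x^(ν+2) * (max w 0)^(ν+2) := by
        rw [hmax, hzq ν, hzq (ν+2), ← hB, ← hA]
        field_simp
      have hU : k * (ν^(p+2) * z^(ν+4))/(8*(p+2)) = Cc / x^(ν+4) * (max w 0)^(ν+4) := by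
        rw [hmax, hzq (ν+4), hCcdef]
        field_simp
      constructor
      · rw [← hL]; exact hbd.1
      · rw [← hL, ← hU]
        exact hbd.2
  -- integrability over μW
  have hmeasq : ∀ q : ℝ, Measurable fun w : ℝ => (max w 0)^q :=
    fun q => (measurable_id.max measurable_const).pow_const q
  have I4 : Integrable (fun w => (max w 0)^(ν+4)) μW := by
    rw [hμWdef, integrable_map_measure ((hmeasq (ν+4)).aestronglyMeasurable)
      hW'meas.aemeasurable]
    refine hW.congr ?_
    filter_upwards [hWW'] with ω h
    show (max (W ω) 0)^(ν+4) = (max (W' ω) 0)^(ν+4)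
    rw [← h, max_eq_left (le_max_right _ _)]
  have hIq : ∀ q : ℝ, 0 < q → q ≤ ν + 4 → Integrable (fun w => (max w 0)^q) μW := by
    intro q hq hq4
    refine Integrable.mono ((integrable_const (1:ℝ)).add I4)
      ((hmeasq q).aestronglyMeasurable) (ae_of_all _ fun w => ?_)
    have ht0 : 0 ≤ max w 0 := le_max_right _ _
    rw [Real.norm_eq_abs, abs_of_nonneg (Real.rpow_nonneg ht0 q), Real.norm_eq_abs]
    have hb : (max w 0)^q ≤ 1 + (max w 0)^(ν+4) := by
      rcases le_or_gt (max w 0) 1 with h|h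
      · have h1 := Real.rpow_le_one ht0 h hq.le
        have h2 := Real.rpow_nonneg ht0 (ν+4)
        linarith
      · have := Real.rpow_le_rpow_of_exponent_le h.le hq4
        linarith
    exact le_trans hb (le_abs_self _)
  have Iν := hIq ν hν (by linarith)
  have Iν2 := hIq (ν+2) (by linarith) (by linarith)
  have hMq : ∀ q : ℝ, ∫ w, (max w 0)^q ∂μW = ∫ ω, max (W ω) 0 ^ q ∂P := by
    intro q
    rw [hμWdef, integral_map hW'meas.aemeasurable ((hmeasq q).aestronglyMeasurable)]
    refine integral_congr_ae ?_
    filter_upwards [hWW'] with ω h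
    show (max (W' ω) 0)^q = (max (W ω) 0)^q
    rw [← h, max_eq_left (le_max_right _ _)]
  -- conclude
  rw [isBigO_iff]
  refine ⟨Cc * ∫ ω, max (W ω) 0 ^ (ν+4) ∂P, ?_⟩
  filter_upwards [eventually_gt_atTop (0:ℝ)] with x hx
  set f0 : ℝ → ℝ := fun w => (μS (Set.Iio (w / x))).toReal with hf0
  have hg0mono : Monotone (fun w : ℝ => μS (Set.Iio (w / x))) := fun w1 w2 h =>
    measure_mono (Set.Iio_subset_Iio (by gcongr))
  have hg0meas := hg0mono.measurable
  have hf0meas : Measurable f0 := ENNReal.measurable_toReal.comp hg0meas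
  have hf0le1 : ∀ w, f0 w ≤ 1 := by
    intro w
    have h1 : μS (Set.Iio (w/x)) ≤ 1 := prob_le_one
    exact ENNReal.toReal_le_of_le_ofReal zero_le_one (by simpa using h1)
  have hf0int : Integrable f0 μW :=
    Integrable.mono' (integrable_const 1) hf0meas.aestronglyMeasurable
      (ae_of_all _ fun w => by
        rw [Real.norm_eq_abs, abs_of_nonneg ENNReal.toReal_nonneg]
        exact hf0le1 w)
  have hPx : (P {ω | W ω * (S ω)⁻¹ > x}).toReal = ∫ w, f0 w ∂μW := by
    rw [hrep x hx, ← integral_toReal hg0meas.aemeasurable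
      (ae_of_all _ fun w => measure_lt_top _ _)]
  set L : ℝ → ℝ := fun w =>
    A / x^ν * (max w 0)^ν - (A*bb) / x^(ν+2) * (max w 0)^(ν+2) with hLdef
  have hLint : Integrable L μW := (Iν.const_mul _).sub (Iν2.const_mul _)
  have hLval : ∫ w, L w ∂μW
      = A / x^ν * (∫ ω, max (W ω) 0 ^ ν ∂P)
        - (A*bb)/x^(ν+2) * ∫ ω, max (W ω) 0 ^ (ν+2) ∂P := by
    rw [hLdef, integral_sub (Iν.const_mul _) (Iν2.const_mul _), integral_const_mul,
      integral_const_mul, hMq ν, hMq (ν+2)]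
  have hlow : ∫ w, L w ∂μW ≤ ∫ w, f0 w ∂μW :=
    integral_mono hLint hf0int (fun w => (hsand x hx w).1)
  have hupp : ∫ w, f0 w ∂μW
      ≤ ∫ w, L w ∂μW + Cc / x^(ν+4) * ∫ ω, max (W ω) 0 ^ (ν+4) ∂P := by
    have h := integral_mono hf0int (hLint.add (I4.const_mul (Cc / x^(ν+4))))
      (fun w => (hsand x hx w).2)
    simp only [Pi.add_apply] at h
    rwa [integral_add hLint (I4.const_mul _), integral_const_mul, hMq (ν+4)] at h
  have hxν : x^ν ≠ 0 := (Real.rpow_pos_of_pos hx ν).ne'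
  have hx2 : x^(2:ℝ) ≠ 0 := (Real.rpow_pos_of_pos hx 2).ne'
  have hmain : A * x^(-ν) * ((∫ ω, max (W ω) 0 ^ ν ∂P)
      - bb * x^(-2:ℝ) * ∫ ω, max (W ω) 0 ^ (ν+2) ∂P) = ∫ w, L w ∂μW := by
    rw [hLval, Real.rpow_neg hx.le ν, Real.rpow_neg hx.le 2, Real.rpow_add hx ν 2]
    field_simp
  have hxe : x^(-ν-4) = (x^(ν+4))⁻¹ := by
    rw [show -ν-4 = -(ν+4) by ring, Real.rpow_neg hx.le]
  rw [hPx, hmain, Real.norm_eq_abs, Real.norm_eq_abs]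
  have hM4 : 0 ≤ ∫ ω, max (W ω) 0 ^ (ν+4) ∂P :=
    integral_nonneg (fun ω => Real.rpow_nonneg (le_max_right _ _) _)
  calc |∫ w, f0 w ∂μW - ∫ w, L w ∂μW|
      ≤ Cc / x^(ν+4) * ∫ ω, max (W ω) 0 ^ (ν+4) ∂P :=
        abs_le.mpr ⟨by linarith, by linarith⟩
    _ = Cc * (∫ ω, max (W ω) 0 ^ (ν+4) ∂P) * |x^(-ν-4)| := by
        rw [hxe, abs_of_nonneg (by positivity)]
        ring
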